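/- arXiv:1911.00207 — 4 statements merged into one kernel-verified Lean document; each statement's English description precedes it below -/
import Mathlib

section
/- Let M be a matroid on a finite set E with rank function r, and let (C_1, …, C_t) be a sequence of circuits of M that is proper, meaning C_i is not contained in C_1 ∪ … ∪ C_{i−1} for all 2 ≤ i ≤ t. Then for every X ⊆ E, r(X) ≤ |X ∪ C_1 ∪ … ∪ C_t| − t. -/
open Set Matroid

variable {α : Type*}

/-- A circuit of a matroid: a minimal dependent subset of the ground set. -/
def IsCircuit (M : Matroid α) (C : Set α) : Prop :=
  C ⊆ M.E ∧ ¬ M.Indep C ∧ ∀ e ∈ C, M.Indep (C \ {e})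

/-- The (natural-number) rank of a set in a matroid: the size of a largest
independent subset. -/
noncomputable def nr (M : Matroid α) (X : Set α) : ℕ :=
  sSup {k | ∃ I, I ⊆ X ∧ M.Indep I ∧ I.ncard = k}

/-- The rank of a matroid. -/
noncomputable def mrk (M : Matroid α) : ℕ := nr M M.E

/-- A cyclic set: a (possibly empty) union of circuits. -/
def Cyclic (M : Matroid α) (X : Set α) : Prop :=
  X ⊆ M.E ∧ ∀ e ∈ X, ∃ C, _root_.IsCircuit M C ∧ C ⊆ X ∧ e ∈ C

/-- A modular pair of sets in a matroid. -/
def ModPair (M : Matroid α) (X Y : Set α) : Prop :=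
  nr M X + nr M Y = nr M (X ∩ Y) + nr M (X ∪ Y)

/-- A coloop of a matroid: an element contained in every base. -/
def IsColoop (M : Matroid α) (e : α) : Prop := ∀ B, M.IsBase B → e ∈ B

/-- A proper sequence of circuits of a matroid: each circuit is not contained in the
union of the preceding ones. -/
def ProperCircuitSeq (M : Matroid α) {t : ℕ} (C : Fin t → Set α) : Prop :=
  (∀ i, _root_.IsCircuit M (C i)) ∧
    ∀ i : Fin t, 0 < (i : ℕ) → ¬ C i ⊆ ⋃ j ∈ {j : Fin t | j < i}, C j

section Aux

variable [Fintype α] {M : Matroid α} {I X Y : Set α}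

lemma le_nr (hIX : I ⊆ X) (hI : M.Indep I) : I.ncard ≤ nr M X := by
  refine le_csSup ⟨(Set.univ : Set α).ncard, ?_⟩ ⟨I, hIX, hI, rfl⟩
  rintro k ⟨J, -, -, rfl⟩
  exact Set.ncard_le_ncard (Set.subset_univ J)

lemma nr_eq_of_basis' (hI : M.IsBasis' I X) : nr M X = I.ncard := by
  refine IsGreatest.csSup_eq ⟨⟨I, hI.subset, hI.indep, rfl⟩, ?_⟩
  rintro k ⟨J, hJX, hJ, rfl⟩
  obtain ⟨I', hI', hJI'⟩ := hJ.subset_isBasis'_of_subset hJX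
  have hcard : I'.ncard = I.ncard := by
    rw [Set.ncard_def, hI'.encard_eq_encard hI, ← Set.ncard_def]
  exact hcard ▸ Set.ncard_le_ncard hJI'

lemma nr_le_ncard (M : Matroid α) (X : Set α) : nr M X ≤ X.ncard := by
  obtain ⟨I, hI⟩ := M.exists_isBasis' X
  rw [nr_eq_of_basis' hI]
  exact Set.ncard_le_ncard hI.subset

lemma nr_mono (h : X ⊆ Y) : nr M X ≤ nr M Y := by
  obtain ⟨I, hI⟩ := M.exists_isBasis' X
  rw [nr_eq_of_basis' hI]
  exact le_nr (hI.subset.trans h) hI.indep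

lemma nr_union_le (M : Matroid α) (A S : Set α) :
    nr M (A ∪ S) ≤ nr M A + (S \ A).ncard := by
  obtain ⟨I, hI⟩ := M.exists_isBasis' (A ∪ S)
  rw [nr_eq_of_basis' hI, ← Set.ncard_inter_add_ncard_diff_eq_ncard I A (Set.toFinite I)]
  have h1 : (I ∩ A).ncard ≤ nr M A :=
    le_nr Set.inter_subset_right (hI.indep.subset Set.inter_subset_left)
  have h2 : (I \ A).ncard ≤ (S \ A).ncard := by
    refine Set.ncard_le_ncard (fun x hx => ⟨?_, hx.2⟩) (Set.toFinite _)
    rcases hI.subset hx.1 with h | h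
    · exact absurd h hx.2
    · exact h
  omega

lemma nr_diff_singleton_eq {e : α} (hXE : X ⊆ M.E)
    (he : e ∈ M.closure (X \ {e})) : nr M X = nr M (X \ {e}) := by
  obtain ⟨I, hI⟩ := M.exists_isBasis' (X \ {e})
  have hclosure : M.closure X = M.closure (X \ {e}) := by
    refine subset_antisymm ?_ (M.closure_subset_closure Set.diff_subset)
    refine M.closure_subset_closure_of_subset_closure (fun x hx => ?_)
    by_cases hxe : x = e
    · exact hxe ▸ he
    · exact M.subset_closure (X \ {e}) (Set.diff_subset.trans hXE) ⟨hx, hxe⟩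
  have hI' : M.IsBasis' I X := by
    rw [isBasis'_iff_isBasis_closure] at hI ⊢
    exact ⟨hclosure ▸ hI.1, hI.2.trans Set.diff_subset⟩
  rw [nr_eq_of_basis' hI, nr_eq_of_basis' hI']

lemma IsCircuit.mem_closure_diff {Cs : Set α} {e : α} (hCs : _root_.IsCircuit M Cs)
    (he : e ∈ Cs) : e ∈ M.closure (Cs \ {e}) := by
  have hdep : M.Dep (insert e (Cs \ {e})) := by
    rw [Set.insert_diff_singleton, Set.insert_eq_of_mem he]
    exact ⟨hCs.2.1, hCs.1⟩
  have := (hCs.2.2 e he).insert_dep_iff.mp hdep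
  exact this.1

end Aux

/-- If `(C_1, …, C_t)` is a proper sequence of circuits of `M`, then
for every `X ⊆ E` we have `r(X) ≤ |X ∪ C_1 ∪ … ∪ C_t| − t`. -/
theorem rank_le_of_properCircuitSeq [Fintype α] (M : Matroid α) {t : ℕ}
    (C : Fin t → Set α) (hC : ProperCircuitSeq M C) (X : Set α) (hX : X ⊆ M.E) :
    nr M X + t ≤ (X ∪ ⋃ i, C i).ncard := by
  set U : ℕ → Set α := fun n => ⋃ j ∈ {j : Fin t | (j : ℕ) < n}, C j with hU
  have hUE : ∀ n, U n ⊆ M.E := by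
    intro n x hx
    simp only [hU, Set.mem_iUnion] at hx
    obtain ⟨j, -, hxj⟩ := hx
    exact (hC.1 j).1 hxj
  have key : ∀ n, n ≤ t → nr M (U n) + n ≤ (U n).ncard := by
    intro n
    induction n with
    | zero =>
      intro _
      simpa using nr_le_ncard M (U 0)
    | succ n ih =>
      intro hnt
      have hn : n < t := hnt
      set i : Fin t := ⟨n, hn⟩ with hi
      have hsucc : U (n + 1) = U n ∪ C i := by
        apply subset_antisymm
        · intro x hx
          simp only [hU, Set.mem_union, Set.mem_iUnion, Set.mem_setOf_eq, exists_prop] at hx ⊢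
          obtain ⟨j, hj, hxj⟩ := hx
          rcases Nat.lt_or_ge (j : ℕ) n with h | h
          · exact Or.inl ⟨j, h, hxj⟩
          · have : j = i := Fin.ext (le_antisymm (Nat.lt_succ_iff.mp hj) h)
            exact Or.inr (this ▸ hxj)
        · intro x hx
          simp only [hU, Set.mem_union, Set.mem_iUnion, Set.mem_setOf_eq, exists_prop] at hx ⊢
          rcases hx with ⟨j, hj, hxj⟩ | hx
          · exact ⟨j, Nat.lt_succ_of_lt hj, hxj⟩
          · exact ⟨i, Nat.lt_succ_self n, hx⟩
      obtain ⟨e, heC, heU⟩ : ∃ e ∈ C i, e ∉ U n := by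
        rcases Nat.eq_zero_or_pos n with h0 | hpos
        · have hne : (C i).Nonempty := by
            rcases Set.eq_empty_or_nonempty (C i) with h | h
            · exact absurd (h ▸ M.empty_indep) (hC.1 i).2.1
            · exact h
          obtain ⟨e, he⟩ := hne
          refine ⟨e, he, ?_⟩
          subst h0
          simp [hU]
        · have hns := hC.2 i (by simpa [hi] using hpos)
          have hUeq : (⋃ j ∈ {j : Fin t | j < i}, C j) = U n := by
            simp only [hU]
            congr 1
          rw [hUeq] at hns
          exact Set.not_subset.mp hns
      -- e is in the closure of C i \ {e}, hence of (U n ∪ C i) \ {e}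
      have hecl : e ∈ M.closure ((U n ∪ C i) \ {e}) := by
        refine M.closure_subset_closure ?_ ((hC.1 i).mem_closure_diff heC)
        exact Set.diff_subset_diff_left Set.subset_union_right
      have hUE' : U n ∪ C i ⊆ M.E := Set.union_subset (hUE n) (hC.1 i).1
      have hdiff : (U n ∪ C i) \ {e} = U n ∪ (C i \ {e}) := by
        rw [Set.union_diff_distrib]
        congr 1
        exact Set.diff_singleton_eq_self heU
      have hrank : nr M (U n ∪ C i) ≤ nr M (U n) + ((C i \ {e}) \ U n).ncard := by
        calc nr M (U n ∪ C i) = nr M ((U n ∪ C i) \ {e}) :=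
              nr_diff_singleton_eq hUE' hecl
          _ = nr M (U n ∪ (C i \ {e})) := by rw [hdiff]
          _ ≤ nr M (U n) + ((C i \ {e}) \ U n).ncard := nr_union_le M _ _
      have hcard : (U n).ncard + ((C i \ {e}) \ U n).ncard + 1 = (U n ∪ C i).ncard := by
        have h1 : U n ∪ C i = insert e (U n ∪ (C i \ {e})) := by
          rw [Set.union_comm (U n), Set.union_comm (U n), ← Set.insert_union,
            Set.insert_diff_singleton, Set.insert_eq_of_mem heC]
        have he' : e ∉ U n ∪ (C i \ {e}) := by
          rintro (h | h)
          · exact heU h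
          · exact h.2 rfl
        rw [h1, Set.ncard_insert_of_notMem he' (Set.toFinite _),
          Set.union_comm, ← Set.diff_union_self,
          Set.ncard_union_eq Set.disjoint_sdiff_left (Set.toFinite _) (Set.toFinite _)]
        omega
      have := ih (Nat.le_of_lt hn)
      rw [hsucc]
      omega
  have hUt : (⋃ i, C i) = U t := by
    simp only [hU]
    apply subset_antisymm
    · exact Set.iUnion_subset fun j => Set.subset_biUnion_of_mem j.isLt
    · exact Set.iUnion₂_subset fun j _ => Set.subset_iUnion C j
  have hkey := key t le_rfl
  have hrank : nr M X ≤ nr M (U t) + (X \ U t).ncard := by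
    calc nr M X ≤ nr M (U t ∪ X) := nr_mono Set.subset_union_right
      _ ≤ nr M (U t) + (X \ U t).ncard := nr_union_le M _ _
  have hcard : (X ∪ ⋃ i, C i).ncard = (U t).ncard + (X \ U t).ncard := by
    have h1 : X ∪ ⋃ i, C i = U t ∪ (X \ U t) := by
      rw [hUt, Set.union_diff_self, Set.union_comm]
    rw [h1, Set.ncard_union_eq Set.disjoint_sdiff_right (Set.toFinite _) (Set.toFinite _)]
  omega
end

section
/- Let M be a matroid on a finite set E whose non-spanning circuits are exactly the members of a family C_0, and let N be a matroid on E in which every member of C_0 is a circuit and such that every independent set of M is independent in N. If N has the same rank as M, then N = M. -/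
open Set Matroid

variable {α : Type*}

private lemma exists_circuit_subset_aux [Fintype α] {M : Matroid α} :
    ∀ n (D : Set α), D.ncard = n → M.Dep D → ∃ C, C ⊆ D ∧ _root_.IsCircuit M C := by
  intro n
  induction n using Nat.strong_induction_on with
  | _ n ih =>
    intro D hn hD
    by_cases h : ∀ e ∈ D, M.Indep (D \ {e})
    · exact ⟨D, Subset.rfl, hD.subset_ground, hD.not_indep, h⟩
    · push_neg at h
      obtain ⟨e, heD, hdep⟩ := h
      have hd : M.Dep (D \ {e}) :=
        dep_of_not_indep hdep (diff_subset.trans hD.subset_ground)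
      obtain ⟨C, hCD, hC⟩ := ih ((D \ {e}).ncard)
        (by subst hn; exact Set.ncard_diff_singleton_lt_of_mem heD D.toFinite) _ rfl hd
      exact ⟨C, hCD.trans diff_subset, hC⟩

/-- Let `M` be a matroid whose non-spanning circuits are exactly the
members of a family `C₀`, and let `N` be a matroid on the same ground set in which every
member of `C₀` is a circuit and such that every independent set of `M` is independent
in `N`. If `N` has the same rank as `M`, then `N = M`. -/
theorem eq_of_weakLE_rank_eq [Fintype α] (M N : Matroid α) (hE : N.E = M.E)
    (C₀ : Set (Set α))
    (hC₀ : ∀ C, C ∈ C₀ ↔ (_root_.IsCircuit M C ∧ ¬ M.Spanning C))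
    (hNC : ∀ C ∈ C₀, _root_.IsCircuit N C)
    (hW : ∀ I, M.Indep I → N.Indep I)
    (hrk : mrk N = mrk M) :
    N = M := by
  refine ext_indep hE (fun I hI => ⟨fun hNI => ?_, hW I⟩)
  by_contra hMI
  have hIE : I ⊆ M.E := hE ▸ hI
  have hD : M.Dep I := dep_of_not_indep hMI hIE
  obtain ⟨C, hCI, hC⟩ := exists_circuit_subset_aux I.ncard I rfl hD
  by_cases hsp : M.Spanning C
  · obtain ⟨e, heC⟩ : C.Nonempty := by
      rw [Set.nonempty_iff_ne_empty]
      rintro rfl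
      exact hC.2.1 M.empty_indep
    have hBi : M.Indep (C \ {e}) := hC.2.2 e heC
    have hcl : C ⊆ M.closure (C \ {e}) := by
      intro x hx
      by_cases hxe : x = e
      · subst hxe
        rw [hBi.mem_closure_iff]
        left
        rw [insert_diff_singleton, insert_eq_of_mem heC]
        exact dep_of_not_indep hC.2.1 hC.1
      · exact M.subset_closure _ (diff_subset.trans hC.1) ⟨hx, hxe⟩
    have hB : M.IsBase (C \ {e}) := hBi.isBase_of_ground_subset_closure (by
      rw [← hsp.closure_eq]
      refine (M.closure_subset_closure hcl).trans ?_
      rw [closure_closure])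
    have hub : ∀ J, M.Indep J → J.ncard ≤ (C \ {e}).ncard := by
      intro J hJ
      obtain ⟨B', hB', hJB'⟩ := hJ.exists_isBase_superset
      have hcard := hB'.encard_eq_encard_of_isBase hB
      calc J.ncard ≤ B'.ncard := Set.ncard_le_ncard hJB' B'.toFinite
        _ = (C \ {e}).ncard := by rw [Set.ncard, Set.ncard, hcard]
    have h1 : mrk M ≤ (C \ {e}).ncard := by
      refine csSup_le ⟨0, ∅, empty_subset _, M.empty_indep, by simp⟩ ?_
      rintro k ⟨J, hJE, hJ, rfl⟩
      exact hub J hJ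
    have h2 : C.ncard ≤ mrk N := by
      refine le_csSup ⟨Fintype.card α, ?_⟩ ⟨C, (hNI.subset hCI).subset_ground,
        hNI.subset hCI, rfl⟩
      rintro k ⟨J, hJE, hJ, rfl⟩
      simpa [Set.ncard_univ, Nat.card_eq_fintype_card] using
        Set.ncard_le_ncard (subset_univ J) finite_univ
    have hlt : (C \ {e}).ncard < C.ncard :=
      Set.ncard_diff_singleton_lt_of_mem heC C.toFinite
    omega
  · have hC0 : C ∈ C₀ := (hC₀ C).2 ⟨hC, hsp⟩
    exact (hNC C hC0).2.1 (hNI.subset hCI)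
end

section
/- Any matroid M on the edge set of the complete graph K_n (n ≥ d + 2) in which the edge set of every copy of K_{d+2} is a circuit has rank at most dn − binom(d+1, 2). -/
open Set Matroid

variable {α : Type*}

/-- The edges of the complete graph on a vertex set `X`. -/
def edgesOn {V : Type*} (X : Set V) : Set (Sym2 V) :=
  {e | ¬ e.IsDiag ∧ ∀ v ∈ e, v ∈ X}

/-- The set of vertices incident to an edge set. -/
def verts {V : Type*} (F : Set (Sym2 V)) : Set V := {v | ∃ e ∈ F, v ∈ e}

/-- The degree of a vertex in an edge set. -/
noncomputable def edeg {V : Type*} (F : Set (Sym2 V)) (v : V) : ℕ :=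
  {e ∈ F | v ∈ e}.ncard

section AuxRank

variable [Fintype α] {M : Matroid α} {X Y Z I S : Set α} {k : ℕ}

lemma nr_bddAbove (M : Matroid α) (X : Set α) :
    BddAbove {k | ∃ I, I ⊆ X ∧ M.Indep I ∧ I.ncard = k} := by
  refine ⟨Fintype.card α, ?_⟩
  rintro k ⟨I, -, -, rfl⟩
  have := Set.ncard_le_ncard (subset_univ I) (toFinite _)
  simpa [Set.ncard_univ, Nat.card_eq_fintype_card] using this

lemma ncard_le_nr (hI : M.Indep I) (hIX : I ⊆ X) : I.ncard ≤ nr M X :=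
  le_csSup (nr_bddAbove M X) ⟨I, hIX, hI, rfl⟩

omit [Fintype α] in
lemma nr_le (h : ∀ I, I ⊆ X → M.Indep I → I.ncard ≤ k) : nr M X ≤ k := by
  refine csSup_le ⟨0, ∅, empty_subset X, M.empty_indep, by simp⟩ ?_
  rintro m ⟨I, h1, h2, rfl⟩
  exact h I h1 h2

lemma nr_union_le_s6 : nr M (X ∪ S) ≤ nr M X + S.ncard := by
  refine nr_le fun I hIX hI => ?_
  have h1 : I ⊆ (I \ S) ∪ S := by
    intro x hx
    by_cases hxS : x ∈ S
    · exact Or.inr hxS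
    · exact Or.inl ⟨hx, hxS⟩
  calc I.ncard ≤ ((I \ S) ∪ S).ncard := Set.ncard_le_ncard h1 (toFinite _)
    _ ≤ (I \ S).ncard + S.ncard := Set.ncard_union_le _ _
    _ ≤ nr M X + S.ncard := by
        have : I \ S ⊆ X := fun x hx => (hIX hx.1).resolve_right hx.2
        exact Nat.add_le_add_right (ncard_le_nr (hI.subset diff_subset) this) _

lemma nr_le_of_subset_closure (hX : X ⊆ M.closure Z) (hZ : Z ⊆ M.E) :
    nr M X ≤ nr M Z := by
  refine nr_le fun I hIX hI => ?_
  obtain ⟨J, hJ⟩ := M.exists_isBasis Z hZ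
  have hIcl : I ⊆ M.closure J := by
    rw [hJ.closure_eq_closure]; exact hIX.trans hX
  have hJb : M.IsBasis J (I ∪ J) := by
    rw [isBasis_iff_indep_closure]
    exact ⟨hJ.indep, union_subset hIcl (M.subset_closure J hJ.indep.subset_ground),
      subset_union_right⟩
  have hIJE : I ∪ J ⊆ M.E :=
    union_subset (hIX.trans (hX.trans (M.closure_subset_ground Z))) (hJ.subset.trans hZ)
  obtain ⟨K, hK, hIK⟩ := hI.subset_isBasis_of_subset subset_union_left hIJE
  have hcard : K.ncard = J.ncard :=
    (hK.restrict_isBase).ncard_eq_ncard_of_isBase (hJb.restrict_isBase)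
  calc I.ncard ≤ K.ncard := Set.ncard_le_ncard hIK (toFinite _)
    _ = J.ncard := hcard
    _ ≤ nr M Z := ncard_le_nr hJ.indep hJ.subset

omit [Fintype α] in
lemma IsCircuit.mem_closure {C : Set α} (hC : _root_.IsCircuit M C) {e : α} (he : e ∈ C) :
    e ∈ M.closure (C \ {e}) := by
  obtain ⟨hCE, hdep, hmin⟩ := hC
  have hI := hmin e he
  rw [hI.mem_closure_iff]
  left
  rw [insert_diff_singleton, insert_eq_of_mem he]
  exact ⟨hdep, hCE⟩

end AuxRank

section AuxEdges

variable {V : Type*}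

lemma edgesOn_mono {X Y : Set V} (h : X ⊆ Y) : edgesOn X ⊆ edgesOn Y :=
  fun _ he => ⟨he.1, fun v hv => h (he.2 v hv)⟩

lemma mk_mem_edgesOn {X : Set V} {a b : V} (hab : a ≠ b) (ha : a ∈ X) (hb : b ∈ X) :
    s(a, b) ∈ edgesOn X := by
  refine ⟨by simpa using hab, fun v hv => ?_⟩
  rcases Sym2.mem_iff.mp hv with rfl | rfl <;> assumption

lemma edgesOn_insert_subset {X : Set V} {v : V} :
    edgesOn (insert v X) ⊆ edgesOn X ∪ (fun u => s(v, u)) '' X := by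
  rintro e ⟨hd, hmem⟩
  induction e using Sym2.ind with
  | _ a b =>
    have hab : a ≠ b := by simpa using hd
    have ha := hmem a (Sym2.mem_mk_left a b)
    have hb := hmem b (Sym2.mem_mk_right a b)
    rcases eq_or_ne a v with rfl | hav
    · right
      have hbX : b ∈ X := hb.resolve_left (Ne.symm hab)
      exact ⟨b, hbX, rfl⟩
    rcases eq_or_ne b v with rfl | hbv
    · right
      have haX : a ∈ X := ha.resolve_left hav
      exact ⟨a, haX, Sym2.eq_swap⟩
    · exact Or.inl (mk_mem_edgesOn hab (ha.resolve_left hav) (hb.resolve_left hbv))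

lemma edgesOn_ncard_le [Finite V] (X : Set V) :
    (edgesOn X).ncard ≤ X.ncard.choose 2 := by
  refine Set.Finite.induction_on X (toFinite X) ?_ ?_
  · have : edgesOn (∅ : Set V) = ∅ := by
      ext e
      simp only [mem_empty_iff_false, iff_false]
      rintro ⟨hd, hmem⟩
      induction e using Sym2.ind with
      | _ a b => exact hmem a (Sym2.mem_mk_left a b)
    simp [this]
  · intro v Y hv hYfin IH
    calc (edgesOn (insert v Y)).ncard
        ≤ (edgesOn Y ∪ (fun u => s(v, u)) '' Y).ncard :=
          Set.ncard_le_ncard edgesOn_insert_subset (toFinite _)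
      _ ≤ (edgesOn Y).ncard + ((fun u => s(v, u)) '' Y).ncard := Set.ncard_union_le _ _
      _ ≤ Y.ncard.choose 2 + Y.ncard :=
          Nat.add_le_add IH (Set.ncard_image_le (toFinite _))
      _ ≤ (insert v Y).ncard.choose 2 := by
          rw [Set.ncard_insert_of_notMem hv (toFinite _)]
          rw [Nat.choose_succ_succ, Nat.choose_one_right]
          show Y.ncard.choose 2 + Y.ncard ≤ Y.ncard + Y.ncard.choose 2
          omega

end AuxEdges

/-- Any matroid on `E(K_n)` (`n ≥ d+2`) in which the edge set of every
copy of `K_{d+2}` is a circuit has rank at most `dn − (d+1 choose 2)`. -/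
theorem rank_le_of_Kd2_matroid (n d : ℕ) (hn : d + 2 ≤ n)
    (M : Matroid (Sym2 (Fin n))) (hE : M.E = edgesOn (univ : Set (Fin n)))
    (hK : ∀ X : Set (Fin n), X.ncard = d + 2 → _root_.IsCircuit M (edgesOn X)) :
    mrk M + Nat.choose (d + 1) 2 ≤ d * n := by
  classical
  have hME : ∀ (X : Set (Fin n)), edgesOn X ⊆ M.E := fun X => by
    rw [hE]; exact edgesOn_mono (subset_univ X)
  have main : ∀ m : ℕ, d + 1 ≤ m → ∀ X : Set (Fin n), X.ncard = m →
      nr M (edgesOn X) + Nat.choose (d + 1) 2 ≤ d * m := by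
    intro m hm
    induction m, hm using Nat.le_induction with
    | base =>
      intro X hX
      have hchoose2 : 2 * Nat.choose (d + 1) 2 = d * (d + 1) := by
        rw [Nat.choose_two_right]
        obtain ⟨r, hr⟩ := Nat.even_mul_succ_self d
        have h1 : (d + 1) * (d + 1 - 1) = d * (d + 1) := by
          simp [Nat.mul_comm]
        rw [h1, hr]
        omega
      have h1 : nr M (edgesOn X) ≤ Nat.choose (d + 1) 2 := by
        refine nr_le fun I hIX hI => ?_
        calc I.ncard ≤ (edgesOn X).ncard := Set.ncard_le_ncard hIX (toFinite _)
          _ ≤ X.ncard.choose 2 := edgesOn_ncard_le X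
          _ = Nat.choose (d + 1) 2 := by rw [hX]
      omega
    | succ m hm IH =>
      intro X hX
      obtain ⟨v, hv⟩ : X.Nonempty := Set.nonempty_of_ncard_ne_zero (by omega)
      set Y := X \ {v} with hYdef
      have hYcard : Y.ncard = m := by
        rw [hYdef, Set.ncard_diff_singleton_of_mem hv, hX]
        omega
      have hvY : v ∉ Y := fun h => h.2 rfl
      obtain ⟨W, hWY, hWcard⟩ := Set.exists_subset_card_eq (show d ≤ Y.ncard by omega)
      set S := (fun u => s(v, u)) '' W with hSdef
      have hZE : edgesOn Y ∪ S ⊆ M.E := by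
        refine union_subset (hME Y) ?_
        rintro e ⟨u, huW, rfl⟩
        rw [hE]
        exact mk_mem_edgesOn (fun h => hvY (h ▸ hWY huW)) (mem_univ _) (mem_univ _)
      have hstar : ∀ b ∈ Y, s(v, b) ∈ M.closure (edgesOn Y ∪ S) := by
        intro b hb
        by_cases hbW : b ∈ W
        · exact M.subset_closure _ hZE (Or.inr ⟨b, hbW, rfl⟩)
        · set T := insert v (insert b W) with hTdef
          have hvbW : v ∉ insert b W := by
            rintro (rfl | h)
            · exact hvY hb
            · exact hvY (hWY h)
          have hTcard : T.ncard = d + 2 := by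
            rw [hTdef, Set.ncard_insert_of_notMem hvbW (toFinite _),
              Set.ncard_insert_of_notMem hbW (toFinite _), hWcard]
          have hC := hK T hTcard
          have hvb : v ≠ b := fun h => hvY (h ▸ hb)
          have heT : s(v, b) ∈ edgesOn T :=
            mk_mem_edgesOn hvb (mem_insert _ _) (mem_insert_of_mem _ (mem_insert _ _))
          have hcl := hC.mem_closure heT
          refine (M.closure_subset_closure ?_) hcl
          rintro f ⟨hf, hfne⟩
          have hfne' : f ≠ s(v, b) := by simpa using hfne
          obtain ⟨hnd, hmem⟩ := hf
          induction f using Sym2.ind with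
          | _ c c' =>
            have hcc' : c ≠ c' := by simpa using hnd
            have hc : c ∈ T := hmem c (Sym2.mem_mk_left c c')
            have hc' : c' ∈ T := hmem c' (Sym2.mem_mk_right c c')
            have hbWY : insert b W ⊆ Y := insert_subset hb hWY
            rcases eq_or_ne c v with rfl | hcv
            · have hc'bW : c' ∈ insert b W := hc'.resolve_left (Ne.symm hcc')
              rcases hc'bW with rfl | hc'W
              · exact absurd rfl hfne'
              · exact Or.inr ⟨c', hc'W, rfl⟩
            rcases eq_or_ne c' v with rfl | hc'v
            · have hcbW : c ∈ insert b W := hc.resolve_left hcv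
              rcases hcbW with rfl | hcW
              · exact absurd Sym2.eq_swap hfne'
              · exact Or.inr ⟨c, hcW, Sym2.eq_swap⟩
            · exact Or.inl (mk_mem_edgesOn hcc'
                (hbWY (hc.resolve_left hcv)) (hbWY (hc'.resolve_left hc'v)))
      have hXcl : edgesOn X ⊆ M.closure (edgesOn Y ∪ S) := by
        rintro e ⟨hd, hmem⟩
        induction e using Sym2.ind with
        | _ a b =>
          have hab : a ≠ b := by simpa using hd
          have ha := hmem a (Sym2.mem_mk_left a b)
          have hb := hmem b (Sym2.mem_mk_right a b)
          rcases eq_or_ne a v with rfl | hav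
          · exact hstar b ⟨hb, by simpa using hab.symm⟩
          rcases eq_or_ne b v with rfl | hbv
          · rw [Sym2.eq_swap]
            exact hstar a ⟨ha, by simpa using hav⟩
          · exact M.subset_closure _ hZE
              (Or.inl (mk_mem_edgesOn hab ⟨ha, by simpa using hav⟩ ⟨hb, by simpa using hbv⟩))
      have hSd : S.ncard ≤ d := le_trans (Set.ncard_image_le (toFinite _)) (le_of_eq hWcard)
      have h2 : nr M (edgesOn X) ≤ nr M (edgesOn Y) + d :=
        calc nr M (edgesOn X) ≤ nr M (edgesOn Y ∪ S) := nr_le_of_subset_closure hXcl hZE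
          _ ≤ nr M (edgesOn Y) + S.ncard := nr_union_le_s6
          _ ≤ nr M (edgesOn Y) + d := Nat.add_le_add_left hSd _
      have h1 := IH Y hYcard
      rw [Nat.mul_succ]
      omega
  have huniv := main n (by omega) univ (by simp [Set.ncard_univ])
  have : M.E = edgesOn (univ : Set (Fin n)) := hE
  calc mrk M + Nat.choose (d + 1) 2
      = nr M (edgesOn (univ : Set (Fin n))) + Nat.choose (d + 1) 2 := by rw [mrk, hE]
    _ ≤ d * n := huniv
end

section
/- In the complete graph K_n on vertices v_1,…,v_n with n ≥ d + 2, there exists a proper K_{d+2}-sequence (C_1, …, C_t) of length t = binom(n−d, 2) such that C_1 ∪ … ∪ C_t = E(K_n), where each C_i is the edge set of a copy of K_{d+2} and 'proper' means C_i ⊄ C_1 ∪ … ∪ C_{i−1} for all i ≥ 2. -/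
open Set Matroid

variable {α : Type*}

/-- A `K_k`-sequence: each term is the edge set of a complete graph on `k` vertices. -/
def IsKSeq (n k : ℕ) {t : ℕ} (C : Fin t → Set (Sym2 (Fin n))) : Prop :=
  ∀ i, ∃ X : Set (Fin n), X.ncard = k ∧ C i = edgesOn X

/-- A proper sequence of edge sets: each term is not contained in the union of the
preceding ones. -/
def ProperSeq {n : ℕ} {t : ℕ} (C : Fin t → Set (Sym2 (Fin n))) : Prop :=
  ∀ i : Fin t, 0 < (i : ℕ) → ¬ C i ⊆ ⋃ j ∈ {j : Fin t | j < i}, C j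

lemma mem_edgesOn {V : Type*} {X : Set V} {a b : V} :
    s(a, b) ∈ edgesOn X ↔ a ≠ b ∧ a ∈ X ∧ b ∈ X := by
  simp only [edgesOn, Set.mem_setOf_eq, Sym2.isDiag_iff_proj_eq, Sym2.mem_iff]
  constructor
  · rintro ⟨h1, h2⟩
    exact ⟨h1, h2 a (Or.inl rfl), h2 b (Or.inr rfl)⟩
  · rintro ⟨h1, h2, h3⟩
    exact ⟨h1, fun v hv => by rcases hv with rfl | rfl <;> assumption⟩

/-- For `n ≥ d+2` there is a proper `K_{d+2}`-sequence of length
`(n−d choose 2)` whose union is `E(K_n)`. -/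
theorem exists_proper_Kd2_seq_covering (n d : ℕ) (hn : d + 2 ≤ n) :
    ∃ C : Fin (Nat.choose (n - d) 2) → Set (Sym2 (Fin n)),
      IsKSeq n (d + 2) C ∧ ProperSeq C ∧ (⋃ i, C i) = edgesOn (univ : Set (Fin n)) := by
  classical
  set m := n - d with hmdef
  have hm2 : 2 ≤ m := by omega
  set f : Fin m ↪ Fin n :=
    ⟨fun x => ⟨d + x, by omega⟩, by intro a b h; simpa [Fin.ext_iff] using h⟩ with hf
  set K : Finset (Fin m) → Finset (Fin n) :=
    fun s => (Finset.univ.filter fun v : Fin n => (v : ℕ) < d) ∪ s.image f with hK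
  have hmemK : ∀ (s : Finset (Fin m)) (v : Fin n),
      v ∈ K s ↔ (v : ℕ) < d ∨ ∃ a ∈ s, f a = v := by
    intro s v; simp [hK]
  have hfK : ∀ (s : Finset (Fin m)) (a : Fin m), f a ∈ K s ↔ a ∈ s := by
    intro s a
    rw [hmemK]
    constructor
    · rintro (h | ⟨b, hb, hba⟩)
      · have : ((f a : Fin n) : ℕ) = d + (a : ℕ) := rfl; omega
      · rwa [← f.injective hba]
    · intro h; exact Or.inr ⟨a, h, rfl⟩
  have hcardK : ∀ s : Finset (Fin m), s.card = 2 → (K s).card = d + 2 := by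
    intro s hs
    rw [hK]
    rw [Finset.card_union_of_disjoint, Finset.card_image_of_injective _ f.injective, hs]
    · congr 1
      have : (Finset.univ.filter fun v : Fin n => (v : ℕ) < d)
          = Finset.Iio (⟨d, by omega⟩ : Fin n) := by
        ext v; simp [Fin.lt_def]
      rw [this, Fin.card_Iio]
    · rw [Finset.disjoint_left]
      rintro v hv hv2
      simp only [Finset.mem_filter] at hv
      simp only [Finset.mem_image] at hv2
      obtain ⟨a, _, rfl⟩ := hv2
      have h2 := hv.2; have : ((f a : Fin n) : ℕ) = d + (a : ℕ) := rfl; omega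
  have hcard : Fintype.card {s : Finset (Fin m) // s.card = 2} = Nat.choose (n - d) 2 := by
    rw [Fintype.card_finset_len]; simp [hmdef]
  set e : Fin (Nat.choose (n - d) 2) ≃ {s : Finset (Fin m) // s.card = 2} :=
    (Fintype.equivFinOfCardEq hcard).symm with he
  refine ⟨fun i => edgesOn (↑(K (e i).1) : Set (Fin n)), ?_, ?_, ?_⟩
  · intro i
    exact ⟨_, by rw [Set.ncard_coe_finset, hcardK _ (e i).2], rfl⟩
  · intro i _ hsub
    obtain ⟨a, b, hab, hs⟩ := Finset.card_eq_two.mp (e i).2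
    have hedge : s(f a, f b) ∈ edgesOn (↑(K (e i).1) : Set (Fin n)) := by
      rw [mem_edgesOn]
      refine ⟨fun h => hab (f.injective h), ?_, ?_⟩ <;>
        simp [hfK, hs]
    have := hsub hedge
    simp only [Set.mem_iUnion, Set.mem_setOf_eq, exists_prop] at this
    obtain ⟨j, hji, hj⟩ := this
    rw [mem_edgesOn] at hj
    have haj : a ∈ (e j).1 := (hfK _ a).mp hj.2.1
    have hbj : b ∈ (e j).1 := (hfK _ b).mp hj.2.2
    have hsub2 : (e i).1 ⊆ (e j).1 := by
      rw [hs]; intro x hx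
      simp only [Finset.mem_insert, Finset.mem_singleton] at hx
      rcases hx with rfl | rfl <;> assumption
    have : (e i) = (e j) := Subtype.ext
      (Finset.eq_of_subset_of_card_le hsub2 (by rw [(e i).2, (e j).2]))
    have : i = j := e.injective this
    omega
  · ext z
    induction z using Sym2.ind with
    | _ u v =>
    simp only [Set.mem_iUnion, mem_edgesOn]
    constructor
    · rintro ⟨i, hi⟩
      exact ⟨hi.1, trivial, trivial⟩
    · rintro ⟨huv, -, -⟩
      have key : ∃ s : Finset (Fin m), s.card = 2 ∧ u ∈ K s ∧ v ∈ K s := by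
        have hmem_of : ∀ (w : Fin n) (s : Finset (Fin m)), (hd : d ≤ (w : ℕ)) →
            (⟨(w : ℕ) - d, by omega⟩ : Fin m) ∈ s → w ∈ K s := by
          intro w s hd hws
          rw [hmemK]
          exact Or.inr ⟨_, hws, Fin.ext (by show d + ((w:ℕ) - d) = (w:ℕ); omega)⟩
        by_cases hu : d ≤ (u : ℕ) <;> by_cases hv : d ≤ (v : ℕ)
        · refine ⟨{⟨(u:ℕ)-d, by omega⟩, ⟨(v:ℕ)-d, by omega⟩}, ?_, ?_, ?_⟩
          · rw [Finset.card_insert_of_notMem, Finset.card_singleton]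
            simp only [Finset.mem_singleton, Fin.mk.injEq]
            intro h
            exact huv (Fin.ext (by omega))
          · exact hmem_of u _ hu (by simp)
          · exact hmem_of v _ hv (by simp)
        · -- u ≥ d, v < d
          set a : Fin m := ⟨(u:ℕ)-d, by omega⟩ with ha
          obtain ⟨b, hba⟩ := Fintype.exists_ne_of_one_lt_card (by simp; omega) a
          refine ⟨{a, b}, ?_, hmem_of u _ hu (by simp [ha]), ?_⟩
          · rw [Finset.card_insert_of_notMem (by simpa using hba.symm),
              Finset.card_singleton]
          · rw [hmemK]; exact Or.inl (by omega)
        · set a : Fin m := ⟨(v:ℕ)-d, by omega⟩ with ha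
          obtain ⟨b, hba⟩ := Fintype.exists_ne_of_one_lt_card (by simp; omega) a
          refine ⟨{a, b}, ?_, ?_, hmem_of v _ hv (by simp [ha])⟩
          · rw [Finset.card_insert_of_notMem (by simpa using hba.symm),
              Finset.card_singleton]
          · rw [hmemK]; exact Or.inl (by omega)
        · refine ⟨{⟨0, by omega⟩, ⟨1, by omega⟩}, ?_, ?_, ?_⟩
          · rw [Finset.card_insert_of_notMem (by simp), Finset.card_singleton]
          · rw [hmemK]; exact Or.inl (by omega)
          · rw [hmemK]; exact Or.inl (by omega)
      obtain ⟨s, hs2, hus, hvs⟩ := key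
      refine ⟨e.symm ⟨s, hs2⟩, ?_⟩
      simp only [Equiv.apply_symm_apply, Finset.mem_coe]
      exact ⟨huv, hus, hvs⟩
end
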